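/- Let g : (0,∞) → (0,∞) be continuous and nonincreasing and let h ∈ C²((0,η]) ∩ C([0,η]) satisfy h'' = -g∘h on (0,η), h(0) = 0, h > 0 and h' > 0 on (0,η]. Then h'(0⁺) := lim_{t→0⁺} h'(t) is finite if and only if ∫₀¹ g(s) ds < +∞ (equivalently, ∫₀^{h(η)} g(s) ds < ∞). -/

import Mathlib

open Set Filter MeasureTheory

/-- for `h'' = -g(h)`, `h(0)=0`, the limit `h'(0⁺)` is finite iff
`∫₀^{h(η)} g(s) ds < ∞`. -/
theorem stmt6 (g : ℝ → ℝ) (η : ℝ) (hη : 0 < η)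
    (hgc : ContinuousOn g (Ioi 0)) (hgpos : ∀ s > (0:ℝ), 0 < g s)
    (hganti : AntitoneOn g (Ioi 0))
    (h hd : ℝ → ℝ)
    (hhc : ContinuousOn h (Icc 0 η))
    (hd1 : ∀ t ∈ Ioc 0 η, HasDerivWithinAt h (hd t) (Ioc 0 η) t)
    (hd2 : ∀ t ∈ Ioo 0 η, HasDerivWithinAt hd (-(g (h t))) (Ioc 0 η) t)
    (h0 : h 0 = 0) (hhpos : ∀ t ∈ Ioc 0 η, 0 < h t)
    (hdpos : ∀ t ∈ Ioc 0 η, 0 < hd t) :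
    (∃ L : ℝ, Tendsto hd (nhdsWithin 0 (Ioi 0)) (nhds L)) ↔
      IntegrableOn g (Ioo 0 (h η)) := by
  -- basic facts
  have hηmem : η ∈ Ioc (0:ℝ) η := ⟨hη, le_refl _⟩
  have hhηpos : 0 < h η := hhpos η hηmem
  have hasAth : ∀ x ∈ Ioo 0 η, HasDerivAt h (hd x) x := fun x hx =>
    (hd1 x ⟨hx.1, hx.2.le⟩).hasDerivAt (Ioc_mem_nhds hx.1 hx.2)
  have hasAthd : ∀ x ∈ Ioo 0 η, HasDerivAt hd (-(g (h x))) x := fun x hx =>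
    (hd2 x hx).hasDerivAt (Ioc_mem_nhds hx.1 hx.2)
  -- h is (strictly) monotone on [0, η]
  have hmono : StrictMonoOn h (Icc 0 η) := by
    apply strictMonoOn_of_deriv_pos (convex_Icc 0 η) hhc
    intro x hx
    rw [interior_Icc] at hx
    rw [(hasAth x hx).deriv]
    exact hdpos x ⟨hx.1, hx.2.le⟩
  have hle : ∀ t ∈ Ioo 0 η, h t ≤ h η := fun t ht =>
    (hmono ⟨ht.1.le, ht.2.le⟩ ⟨hη.le, le_refl _⟩ ht.2).le
  -- hd is strictly antitone on (0, η)
  have hdanti : StrictAntiOn hd (Ioo 0 η) := by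
    apply strictAntiOn_of_deriv_neg (convex_Ioo 0 η)
    · exact fun x hx => ((hasAthd x hx).continuousAt).continuousWithinAt
    · intro x hx
      rw [interior_Ioo] at hx
      rw [(hasAthd x hx).deriv]
      exact neg_neg_iff_pos.mpr (hgpos _ (hhpos x ⟨hx.1, hx.2.le⟩))
  -- interval integrability of g on positive intervals
  have hgint : ∀ a b : ℝ, 0 < a → 0 < b → IntervalIntegrable g volume a b := by
    intro a b ha hb
    apply ContinuousOn.intervalIntegrable
    exact hgc.mono fun x hx => lt_of_lt_of_le (lt_min ha hb) hx.1
  -- the primitive G x = ∫_x^{h η} g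
  set G : ℝ → ℝ := fun x => ∫ s in x..(h η), g s with hGdef
  have hGder : ∀ x : ℝ, 0 < x → HasDerivAt G (-(g x)) x := by
    intro x hx
    have hF : HasDerivAt (fun u => ∫ s in (h η)..u, g s) (g x) x :=
      intervalIntegral.integral_hasDerivAt_right (hgint _ _ hhηpos hx)
        (hgc.stronglyMeasurableAtFilter isOpen_Ioi x hx)
        (hgc.continuousAt (Ioi_mem_nhds hx))
    have heq : G = fun u => -∫ s in (h η)..u, g s := by
      funext u
      exact intervalIntegral.integral_symm (h η) u
    rw [heq]
    exact hF.neg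
  -- energy "constant" along solutions
  set E : ℝ → ℝ := fun u => hd u * hd u - 2 * G (h u) with hEdef
  have hEat : ∀ x ∈ Ioo 0 η, HasDerivAt E 0 x := by
    intro x hx
    have h1 := hasAth x hx
    have h2 := hasAthd x hx
    have h3 : HasDerivAt (fun u => G (h u)) (-(g (h x)) * hd x) x :=
      (hGder (h x) (hhpos x ⟨hx.1, hx.2.le⟩)).comp x h1
    have := (h2.mul h2).sub (h3.const_mul 2)
    exact this.congr_deriv (by ring)
  have hconst : ∀ s t : ℝ, s ∈ Ioo 0 η → t ∈ Ioo 0 η → s ≤ t → E t = E s := by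
    intro s t hs ht hst
    have hsub : Icc s t ⊆ Ioo 0 η := fun x hx =>
      ⟨lt_of_lt_of_le hs.1 hx.1, lt_of_le_of_lt hx.2 ht.2⟩
    have := constant_of_has_deriv_right_zero
      (f := E) (a := s) (b := t)
      (fun x hx => ((hEat x (hsub hx)).continuousAt).continuousWithinAt)
      (fun x hx => ((hEat x (hsub ⟨hx.1, hx.2.le⟩)).hasDerivWithinAt))
    exact this t ⟨hst, le_refl _⟩
  set c : ℝ := η / 2 with hcdef
  have hcmem : c ∈ Ioo 0 η := ⟨by positivity, by
    rw [hcdef]; linarith⟩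
  set C : ℝ := hd c * hd c - 2 * G (h c) with hCdef
  have energy : ∀ t ∈ Ioo 0 η, hd t * hd t = C + 2 * G (h t) := by
    intro t ht
    rcases le_total t c with hct | hct
    · have := hconst t c ht hcmem hct
      simp only [hEdef] at this
      rw [hCdef]; linarith
    · have := hconst c t hcmem ht hct
      simp only [hEdef] at this
      rw [hCdef]; linarith
  have hGeq : ∀ t ∈ Ioo 0 η, G (h t) = ∫ x in Ioc (h t) (h η), g x := fun t ht =>
    intervalIntegral.integral_of_le (hle t ht)
  have hdposIoo : ∀ t ∈ Ioo 0 η, 0 < hd t := fun t ht => hdpos t ⟨ht.1, ht.2.le⟩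
  -- h tends to 0 from the right
  have htend0 : Tendsto h (nhdsWithin 0 (Ioi 0)) (nhds 0) := by
    have h1 : ContinuousWithinAt h (Icc 0 η) 0 := hhc 0 ⟨le_refl _, hη.le⟩
    have h2 : Tendsto h (nhdsWithin 0 (Icc 0 η)) (nhds (h 0)) := h1
    rw [h0] at h2
    have h3 : Tendsto h (nhdsWithin 0 (Ioo 0 η)) (nhds 0) :=
      h2.mono_left (nhdsWithin_mono _ Ioo_subset_Icc_self)
    rwa [nhdsWithin_Ioo_eq_nhdsGT hη] at h3
  constructor
  · -- limit exists ⇒ integrable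
    rintro ⟨L, hL⟩
    have hLub : ∀ t ∈ Ioo 0 η, hd t ≤ L := by
      intro t ht
      have hev : ∀ᶠ s in nhdsWithin 0 (Ioi 0), hd t ≤ hd s := by
        filter_upwards [Ioo_mem_nhdsGT_of_mem (Set.mem_Ico.mpr ⟨le_refl (0:ℝ), ht.1⟩)]
          with s hs
        exact (hdanti ⟨hs.1, hs.2.trans ht.2⟩ ht hs.2).le
      exact ge_of_tendsto hL hev
    -- cutoff version of h that is always positive and ≤ h η
    set ψ : ℝ → ℝ := fun s => if s ∈ Ioo 0 η then h s else h c with hψdef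
    have hψpos : ∀ s, 0 < ψ s := by
      intro s
      simp only [hψdef]
      split_ifs with hs
      · exact hhpos s ⟨hs.1, hs.2.le⟩
      · exact hhpos c ⟨hcmem.1, hcmem.2.le⟩
    have hψle : ∀ s, ψ s ≤ h η := by
      intro s
      simp only [hψdef]
      split_ifs with hs
      · exact hle s hs
      · exact hle c hcmem
    have hψtend : Tendsto ψ (nhdsWithin 0 (Ioi 0)) (nhds 0) := by
      apply Tendsto.congr' _ htend0
      filter_upwards [Ioo_mem_nhdsGT_of_mem (Set.mem_Ico.mpr ⟨le_refl (0:ℝ), hη⟩)]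
        with s hs
      simp only [hψdef, if_pos hs]
    have hfi : ∀ s : ℝ, IntegrableOn g (Ioc (ψ s) (h η)) := by
      intro s
      have : ContinuousOn g (Icc (ψ s) (h η)) :=
        hgc.mono fun x hx => lt_of_lt_of_le (hψpos s) hx.1
      exact this.integrableOn_Icc.mono_set Ioc_subset_Icc_self
    have hbound : ∀ᶠ s in nhdsWithin 0 (Ioi 0),
        (∫ x in Ioc (ψ s) (h η), ‖g x‖) ≤ (L * L - C) / 2 := by
      filter_upwards [Ioo_mem_nhdsGT_of_mem (Set.mem_Ico.mpr ⟨le_refl (0:ℝ), hη⟩)]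
        with s hs
      have hψs : ψ s = h s := by simp only [hψdef, if_pos hs]
      have hnorm : (∫ x in Ioc (ψ s) (h η), ‖g x‖) = ∫ x in Ioc (ψ s) (h η), g x := by
        apply setIntegral_congr_fun measurableSet_Ioc
        intro x hx
        exact Real.norm_of_nonneg (hgpos x (lt_of_lt_of_le (hψpos s) hx.1.le)).le
      rw [hnorm, hψs, ← hGeq s hs]
      have hE := energy s hs
      have hds := hdposIoo s hs
      have hLs := hLub s hs
      nlinarith [hds.le, hLs]
    have := integrableOn_Ioc_of_intervalIntegral_norm_bounded_left hfi hψtend hbound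
    exact this.mono_set Ioo_subset_Ioc_self
  · -- integrable ⇒ limit exists
    intro hint
    have hintIoc : IntegrableOn g (Ioc 0 (h η)) :=
      (integrableOn_Ioc_iff_integrableOn_Ioo).mpr hint
    set I : ℝ := ∫ x in Ioc 0 (h η), g x with hIdef
    have hGle : ∀ t ∈ Ioo 0 η, G (h t) ≤ I := by
      intro t ht
      rw [hGeq t ht, hIdef]
      apply setIntegral_mono_set hintIoc
      · refine (ae_restrict_iff' measurableSet_Ioc).2 (ae_of_all _ fun x hx => ?_)
        exact (hgpos x hx.1).le
      · have : Ioc (h t) (h η) ⊆ Ioc 0 (h η) :=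
          Ioc_subset_Ioc_left (hhpos t ⟨ht.1, ht.2.le⟩).le
        exact HasSubset.Subset.eventuallyLE this
    have hB : BddAbove (hd '' Ioo 0 η) := by
      refine ⟨Real.sqrt (C + 2 * I), ?_⟩
      rintro _ ⟨t, ht, rfl⟩
      have hE := energy t ht
      have hds := hdposIoo t ht
      have h1 : hd t * hd t ≤ C + 2 * I := by
        have := hGle t ht; linarith
      calc hd t = Real.sqrt (hd t * hd t) := (Real.sqrt_mul_self hds.le).symm
        _ ≤ Real.sqrt (C + 2 * I) := Real.sqrt_le_sqrt h1
    exact ⟨_, AntitoneOn.tendsto_nhdsWithin_Ioo_right ⟨c, hcmem⟩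
      hdanti.antitoneOn hB⟩
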